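/- Let X ⊆ ℝ^d be a compact set with 0 ∉ conv(X), and suppose the unit ball of the source norm is rotund. Then the conical hull cone(X) = {λx : x ∈ X, λ > 0} is Capra-convex. -/

import Mathlib

open Set

lemma aux_isCompact_convexHull {d : ℕ} {K : Set (EuclideanSpace ℝ (Fin d))}
    (hK : IsCompact K) : IsCompact (convexHull ℝ K) := by
  classical
  rcases K.eq_empty_or_nonempty with rfl | ⟨k₀, hk₀⟩
  · simpa using isCompact_empty
  set n := d + 1 with hn
  set S : Set ((Fin n → ℝ) × (Fin n → EuclideanSpace ℝ (Fin d))) :=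
    (stdSimplex ℝ (Fin n)) ×ˢ (Set.univ.pi fun _ : Fin n => K) with hSdef
  set f : ((Fin n → ℝ) × (Fin n → EuclideanSpace ℝ (Fin d))) → EuclideanSpace ℝ (Fin d) :=
    fun p => ∑ i, p.1 i • p.2 i with hf
  have hcont : Continuous f := by
    apply continuous_finset_sum
    intro i _
    exact ((continuous_apply i).comp continuous_fst).smul
      ((continuous_apply i).comp continuous_snd)
  have hS : IsCompact S := (isCompact_stdSimplex (𝕜 := ℝ) (ι := Fin n)).prod (isCompact_univ_pi fun _ => hK)
  have himg : convexHull ℝ K = f '' S := by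
    apply Subset.antisymm
    · intro x hx
      rw [convexHull_eq_union] at hx
      simp only [mem_iUnion] at hx
      obtain ⟨t, hts, hai, hxt⟩ := hx
      rw [Finset.convexHull_eq] at hxt
      obtain ⟨w, hw0, hw1, hwx⟩ := hxt
      have hcard : t.card ≤ n := by
        have h1 := hai.card_le_finrank_succ
        have h2 : Module.finrank ℝ (vectorSpan ℝ (Set.range ((↑) : ↑t → EuclideanSpace ℝ (Fin d))))
            ≤ Module.finrank ℝ (EuclideanSpace ℝ (Fin d)) := Submodule.finrank_le _
        have h3 : Module.finrank ℝ (EuclideanSpace ℝ (Fin d)) = d := by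
          simp [finrank_euclideanSpace]
        rw [Fintype.card_coe] at h1
        omega
      set m := t.card with hm
      have hψeq : m + (n - m) = n := by omega
      set φ : Fin m ≃ ↑t := t.equivFin.symm with hφ
      set ψ : (Fin m ⊕ Fin (n - m)) ≃ Fin n := finSumFinEquiv.trans (finCongr hψeq) with hψ
      set W : Fin n → ℝ := fun i => Sum.elim (fun j => w (φ j)) (fun _ => 0) (ψ.symm i) with hW
      set Z : Fin n → EuclideanSpace ℝ (Fin d) :=
        fun i => Sum.elim (fun j => ((φ j : EuclideanSpace ℝ (Fin d)))) (fun _ => k₀)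
          (ψ.symm i) with hZ
      have hsum : ∀ (g : Fin m ⊕ Fin (n - m) → EuclideanSpace ℝ (Fin d)),
          ∑ i : Fin n, g (ψ.symm i) = ∑ s, g s := fun g => Equiv.sum_comp ψ.symm g
      have hsumR : ∀ (g : Fin m ⊕ Fin (n - m) → ℝ),
          ∑ i : Fin n, g (ψ.symm i) = ∑ s, g s := fun g => Equiv.sum_comp ψ.symm g
      refine ⟨(W, Z), ⟨⟨fun i => ?_, ?_⟩, fun i _ => ?_⟩, ?_⟩
      · rcases h : ψ.symm i with j | j
        · simp only [hW, h, Sum.elim_inl]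
          exact hw0 _ (φ j).2
        · simp [hW, h]
      · show ∑ i : Fin n, W i = 1
        rw [hW]
        rw [hsumR (Sum.elim (fun j => w (φ j)) (fun _ => 0))]
        rw [Fintype.sum_sum_type]
        simp only [Sum.elim_inl, Sum.elim_inr, Finset.sum_const_zero, add_zero]
        rw [Equiv.sum_comp φ (fun a : ↑t => w a), Finset.sum_coe_sort]
        exact hw1
      · show Z i ∈ K
        rcases h : ψ.symm i with j | j
        · simp only [hZ, h, Sum.elim_inl]
          exact hts (φ j).2
        · simp only [hZ, h, Sum.elim_inr]
          exact hk₀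
      · show f (W, Z) = x
        rw [hf]
        simp only
        have : ∑ i : Fin n, W i • Z i
            = ∑ s : Fin m ⊕ Fin (n - m), (Sum.elim (fun j => w (φ j)) (fun _ => 0) s) •
                (Sum.elim (fun j => ((φ j : EuclideanSpace ℝ (Fin d)))) (fun _ => k₀) s) := by
          rw [hW, hZ]
          exact hsum (fun s : Fin m ⊕ Fin (n - m) => (Sum.elim (fun j => w (φ j)) (fun _ => 0) s) •
            (Sum.elim (fun j => ((φ j : EuclideanSpace ℝ (Fin d)))) (fun _ => k₀) s))
        rw [this, Fintype.sum_sum_type]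
        simp only [Sum.elim_inl, Sum.elim_inr, zero_smul, Finset.sum_const_zero, add_zero]
        rw [Equiv.sum_comp φ (fun a : ↑t => w a • (a : EuclideanSpace ℝ (Fin d))),
          Finset.sum_coe_sort t (fun a => w a • a)]
        rw [← hwx, Finset.centerMass_eq_of_sum_1 _ _ hw1]
        rfl
    · rintro _ ⟨⟨w, z⟩, ⟨hw, hz⟩, rfl⟩
      exact mem_convexHull_of_exists_fintype w z hw.1 hw.2 (fun i => hz i (mem_univ i)) rfl
  rw [himg]; exact hS.image hcont


lemma aux_N_cont {d : ℕ} (N : EuclideanSpace ℝ (Fin d) → ℝ)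
    (hN0 : N 0 = 0)
    (hNh : ∀ (a : ℝ) (x : EuclideanSpace ℝ (Fin d)), N (a • x) = |a| * N x)
    (hNt : ∀ x y : EuclideanSpace ℝ (Fin d), N (x + y) ≤ N x + N y) :
    Continuous N := by
  classical
  have hNneg : ∀ x, N (-x) = N x := by
    intro x
    have := hNh (-1) x
    simpa using this
  have hNnn : ∀ x, 0 ≤ N x := by
    intro x
    have h := hNt x (-x)
    rw [add_neg_cancel, hN0, hNneg] at h
    linarith
  set C : ℝ := ∑ i : Fin d, N (EuclideanSpace.single i 1) with hCdef
  have hCnn : 0 ≤ C := Finset.sum_nonneg fun i _ => hNnn _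
  have hcoord : ∀ (x : EuclideanSpace ℝ (Fin d)) (i : Fin d), |x i| ≤ ‖x‖ := by
    intro x i
    have h1 : (x i : ℝ) = inner ℝ (EuclideanSpace.single i (1:ℝ)) x := by
      rw [EuclideanSpace.inner_single_left]; simp
    calc |x i| = |(inner ℝ (EuclideanSpace.single i (1:ℝ)) x : ℝ)| := by rw [← h1]
      _ ≤ ‖EuclideanSpace.single i (1:ℝ)‖ * ‖x‖ := abs_real_inner_le_norm _ _
      _ = ‖x‖ := by rw [EuclideanSpace.norm_single]; simp
  have hle : ∀ x, N x ≤ C * ‖x‖ := by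
    intro x
    have hrepr : x = ∑ i : Fin d, x i • EuclideanSpace.single i (1:ℝ) := by
      have := (EuclideanSpace.basisFun (Fin d) ℝ).sum_repr x
      simp only [EuclideanSpace.basisFun_repr, EuclideanSpace.basisFun_apply] at this
      exact this.symm
    calc N x = N (∑ i : Fin d, x i • EuclideanSpace.single i (1:ℝ)) := by rw [← hrepr]
      _ ≤ ∑ i : Fin d, N (x i • EuclideanSpace.single i (1:ℝ)) :=
          Finset.le_sum_of_subadditive N hN0.le hNt _ _
      _ = ∑ i : Fin d, |x i| * N (EuclideanSpace.single i (1:ℝ)) := by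
          simp [hNh]
      _ ≤ ∑ i : Fin d, ‖x‖ * N (EuclideanSpace.single i (1:ℝ)) := by
          apply Finset.sum_le_sum
          intro i _
          exact mul_le_mul_of_nonneg_right (hcoord x i) (hNnn _)
      _ = C * ‖x‖ := by rw [← Finset.mul_sum, mul_comm]
  have hlip : LipschitzWith (Real.toNNReal C) N := by
    apply LipschitzWith.of_dist_le_mul
    intro x y
    rw [Real.dist_eq, dist_eq_norm]
    have h1 : N x - N y ≤ N (x - y) := by
      have := hNt (x - y) y
      simp only [sub_add_cancel] at this
      linarith
    have h2 : N y - N x ≤ N (x - y) := by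
      have := hNt (y - x) x
      simp only [sub_add_cancel] at this
      have hs : N (y - x) = N (x - y) := by
        rw [← hNneg (y - x)]; congr 1; abel
      linarith [hs ▸ this]
    have h3 : |N x - N y| ≤ N (x - y) := abs_sub_le_iff.2 ⟨by linarith, by linarith⟩
    calc |N x - N y| ≤ N (x - y) := h3
      _ ≤ C * ‖x - y‖ := hle _
      _ ≤ (Real.toNNReal C : ℝ) * ‖x - y‖ := by
          apply mul_le_mul_of_nonneg_right _ (norm_nonneg _)
          exact Real.le_coe_toNNReal C
  exact hlip.continuous


open Classical in
noncomputable def radProj {d : ℕ} (N : EuclideanSpace ℝ (Fin d) → ℝ)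
    (x : EuclideanSpace ℝ (Fin d)) : EuclideanSpace ℝ (Fin d) :=
  if x = 0 then 0 else (N x)⁻¹ • x

noncomputable def capraConj {d : ℕ} (N : EuclideanSpace ℝ (Fin d) → ℝ)
    (f : EuclideanSpace ℝ (Fin d) → EReal) (y : EuclideanSpace ℝ (Fin d)) : EReal :=
  ⨆ x : EuclideanSpace ℝ (Fin d), ((inner ℝ (radProj N x) y : ℝ) : EReal) - f x

noncomputable def capraBiconj {d : ℕ} (N : EuclideanSpace ℝ (Fin d) → ℝ)
    (f : EuclideanSpace ℝ (Fin d) → EReal) (x : EuclideanSpace ℝ (Fin d)) : EReal :=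
  ⨆ y : EuclideanSpace ℝ (Fin d), ((inner ℝ (radProj N x) y : ℝ) : EReal) - capraConj N f y

open Classical in
noncomputable def ind {d : ℕ} (X : Set (EuclideanSpace ℝ (Fin d)))
    (x : EuclideanSpace ℝ (Fin d)) : EReal :=
  if x ∈ X then 0 else ⊤

def IsCapraConvex {d : ℕ} (N : EuclideanSpace ℝ (Fin d) → ℝ)
    (X : Set (EuclideanSpace ℝ (Fin d))) : Prop :=
  ind X = capraBiconj N (ind X)

def coneHull {d : ℕ} (A : Set (EuclideanSpace ℝ (Fin d))) : Set (EuclideanSpace ℝ (Fin d)) :=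
  {y | ∃ a ∈ A, ∃ l : ℝ, 0 < l ∧ y = l • a}

theorem stmt {d : ℕ} (N : EuclideanSpace ℝ (Fin d) → ℝ)
    (hN0 : ∀ x : EuclideanSpace ℝ (Fin d), N x = 0 ↔ x = 0)
    (hNh : ∀ (a : ℝ) (x : EuclideanSpace ℝ (Fin d)), N (a • x) = |a| * N x)
    (hNt : ∀ x y : EuclideanSpace ℝ (Fin d), N (x + y) ≤ N x + N y)
    (hrot : ∀ x : EuclideanSpace ℝ (Fin d), N x = 1 → x ∈ Set.extremePoints ℝ {y : EuclideanSpace ℝ (Fin d) | N y ≤ 1})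
    (X : Set (EuclideanSpace ℝ (Fin d))) (hX : IsCompact X)
    (h0 : (0 : EuclideanSpace ℝ (Fin d)) ∉ convexHull ℝ X) :
    IsCapraConvex N (coneHull X) := by
  classical
  have hNzero : N 0 = 0 := (hN0 0).mpr rfl
  have hNcont := aux_N_cont N hNzero hNh hNt
  have hNneg : ∀ x, N (-x) = N x := by
    intro x; have := hNh (-1) x; simpa using this
  have hNnn : ∀ x, 0 ≤ N x := by
    intro x
    have h := hNt x (-x)
    rw [add_neg_cancel, hNzero, hNneg] at h
    linarith
  unfold IsCapraConvex
  rcases X.eq_empty_or_nonempty with rfl | hXne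
  · have hCe : coneHull (∅ : Set (EuclideanSpace ℝ (Fin d))) = ∅ := by
      ext y; simp [coneHull]
    rw [hCe]
    have hindtop : ∀ z, ind (∅ : Set (EuclideanSpace ℝ (Fin d))) z = ⊤ := fun z => by
      simp [ind]
    have hconj : ∀ y, capraConj N (ind (∅ : Set (EuclideanSpace ℝ (Fin d)))) y = ⊥ := by
      intro y; unfold capraConj
      simp [hindtop, EReal.sub_top]
    funext x
    rw [hindtop x]
    unfold capraBiconj
    simp [hconj]
  · obtain ⟨a₀, ha₀⟩ := hXne
    set C := coneHull X with hCdef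
    have hX0 : (0 : EuclideanSpace ℝ (Fin d)) ∉ X := fun h => h0 (subset_convexHull ℝ X h)
    have hXne0 : ∀ a ∈ X, a ≠ 0 := fun a ha h => hX0 (h ▸ ha)
    have hNpos : ∀ a, a ≠ 0 → 0 < N a := by
      intro a ha
      rcases lt_or_eq_of_le (hNnn a) with h | h
      · exact h
      · exact absurd ((hN0 a).mp h.symm) ha
    set g : EuclideanSpace ℝ (Fin d) → EuclideanSpace ℝ (Fin d) := fun a => (N a)⁻¹ • a
      with hgdef
    set K := g '' X with hKdef
    have hgrad : ∀ a ∈ X, radProj N a = g a := by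
      intro a ha; unfold radProj; rw [if_neg (hXne0 a ha)]
    have hKcpt : IsCompact K := hX.image_of_continuousOn
      ((hNcont.continuousOn.inv₀ fun a ha => (hNpos a (hXne0 a ha)).ne').smul continuousOn_id)
    have hKne : K.Nonempty := ⟨g a₀, a₀, ha₀, rfl⟩
    have hK1 : ∀ u ∈ K, N u = 1 := by
      rintro _ ⟨a, ha, rfl⟩
      show N ((N a)⁻¹ • a) = 1
      have h := hNpos a (hXne0 a ha)
      rw [hNh, abs_of_pos (inv_pos.2 h), inv_mul_cancel₀ h.ne']
    have hradsmul : ∀ (l : ℝ), 0 < l → ∀ a : EuclideanSpace ℝ (Fin d), a ≠ 0 →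
        radProj N (l • a) = g a := by
      intro l hl a ha
      unfold radProj
      rw [if_neg (smul_ne_zero hl.ne' ha)]
      show (N (l • a))⁻¹ • (l • a) = (N a)⁻¹ • a
      rw [hNh, abs_of_pos hl, smul_smul]
      congr 1
      rw [mul_inv_rev, mul_assoc, inv_mul_cancel₀ hl.ne', mul_one]
    have hmemCK : ∀ x ∈ C, radProj N x ∈ K := by
      rintro x ⟨a, ha, l, hl, rfl⟩
      rw [hradsmul l hl a (hXne0 a ha)]
      exact ⟨a, ha, rfl⟩
    have h0K : (0 : EuclideanSpace ℝ (Fin d)) ∉ convexHull ℝ K := by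
      intro hmem
      rw [mem_convexHull_iff_exists_fintype] at hmem
      obtain ⟨ι, _, w, z, hw0, hw1, hz, hsum⟩ := hmem
      choose a haX haz using hz
      set s : ι → ℝ := fun i => w i * (N (a i))⁻¹ with hsdef
      have hs0 : ∀ i, 0 ≤ s i := fun i => mul_nonneg (hw0 i) (inv_nonneg.2 (hNnn _))
      have hsa : ∑ i, s i • a i = 0 := by
        rw [← hsum]
        apply Finset.sum_congr rfl
        intro i _
        rw [← haz i]
        show (w i * (N (a i))⁻¹) • a i = w i • ((N (a i))⁻¹ • a i)
        rw [smul_smul]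
      obtain ⟨j, hj⟩ : ∃ i, 0 < w i := by
        by_contra h
        push_neg at h
        have : ∑ i, w i ≤ 0 := Finset.sum_nonpos fun i _ => h i
        linarith
      have hsj : 0 < s j := mul_pos hj (inv_pos.2 (hNpos _ (hXne0 _ (haX j))))
      set T := ∑ i, s i with hTdef
      have hT : 0 < T :=
        lt_of_lt_of_le hsj (Finset.single_le_sum (fun i _ => hs0 i) (Finset.mem_univ j))
      apply h0
      apply mem_convexHull_of_exists_fintype (fun i => s i / T) a
        (fun i => div_nonneg (hs0 i) hT.le) ?_ haX ?_
      · rw [← Finset.sum_div, div_self hT.ne']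
      · calc ∑ i, (s i / T) • a i = T⁻¹ • ∑ i, s i • a i := by
              rw [Finset.smul_sum]
              apply Finset.sum_congr rfl
              intro i _
              rw [smul_smul, div_eq_inv_mul]
          _ = 0 := by rw [hsa, smul_zero]
    have hballconv : Convex ℝ {y : EuclideanSpace ℝ (Fin d) | N y ≤ 1} := by
      intro y hy z hz p q hp hq hpq
      show N (p • y + q • z) ≤ 1
      calc N (p • y + q • z) ≤ N (p • y) + N (q • z) := hNt _ _
        _ = p * N y + q * N z := by rw [hNh, hNh, abs_of_nonneg hp, abs_of_nonneg hq]
        _ ≤ p * 1 + q * 1 :=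
            add_le_add (mul_le_mul_of_nonneg_left hy hp) (mul_le_mul_of_nonneg_left hz hq)
        _ = 1 := by rw [mul_one, mul_one, hpq]
    have hKball : convexHull ℝ K ⊆ {y | N y ≤ 1} :=
      convexHull_min (fun u hu => (hK1 u hu).le) hballconv
    have hDcl : IsClosed (convexHull ℝ K) := (aux_isCompact_convexHull hKcpt).isClosed
    have hmain : ∀ x, x ∈ C ↔ radProj N x ∈ convexHull ℝ K := by
      intro x
      constructor
      · intro hx; exact subset_convexHull ℝ K (hmemCK x hx)
      · intro hx
        by_cases hx0 : x = 0
        · exfalso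
          apply h0K
          rw [hx0] at hx
          unfold radProj at hx
          rwa [if_pos rfl] at hx
        · have hNx : 0 < N x := hNpos x hx0
          have hu' : radProj N x = (N x)⁻¹ • x := by unfold radProj; rw [if_neg hx0]
          have hNu : N (radProj N x) = 1 := by
            rw [hu', hNh, abs_of_pos (inv_pos.2 hNx), inv_mul_cancel₀ hNx.ne']
          have hext := hrot _ hNu
          have hextK : radProj N x ∈ Set.extremePoints ℝ (convexHull ℝ K) := by
            rw [mem_extremePoints] at hext ⊢
            exact ⟨hx, fun x₁ h₁ x₂ h₂ hseg => hext.2 x₁ (hKball h₁) x₂ (hKball h₂) hseg⟩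
          obtain ⟨a, haX, hga⟩ := extremePoints_convexHull_subset hextK
          refine ⟨a, haX, N x * (N a)⁻¹, mul_pos hNx (inv_pos.2 (hNpos a (hXne0 a haX))), ?_⟩
          have hxu : x = N x • radProj N x := by
            rw [hu', smul_smul, mul_inv_cancel₀ hNx.ne', one_smul]
          calc x = N x • radProj N x := hxu
            _ = N x • g a := by rw [hga]
            _ = (N x * (N a)⁻¹) • a := by
                show N x • ((N a)⁻¹ • a) = (N x * (N a)⁻¹) • a
                rw [smul_smul]
    set M : EuclideanSpace ℝ (Fin d) → ℝ :=
      fun y => sSup ((fun u => (inner ℝ u y : ℝ)) '' K) with hMdef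
    have hinncont : ∀ y : EuclideanSpace ℝ (Fin d),
        Continuous (fun u : EuclideanSpace ℝ (Fin d) => (inner ℝ u y : ℝ)) := fun y =>
      continuous_id.inner continuous_const
    have hMim : ∀ y, IsCompact ((fun u => (inner ℝ u y : ℝ)) '' K) := fun y =>
      hKcpt.image (hinncont y)
    have hMmem : ∀ y, M y ∈ ((fun u => (inner ℝ u y : ℝ)) '' K) := fun y =>
      (hMim y).sSup_mem (hKne.image _)
    have hMle : ∀ y, ∀ u ∈ K, (inner ℝ u y : ℝ) ≤ M y := fun y u hu =>
      le_csSup (hMim y).bddAbove ⟨u, hu, rfl⟩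
    have hconj : ∀ y, capraConj N (ind C) y = ((M y : ℝ) : EReal) := by
      intro y
      unfold capraConj
      apply le_antisymm
      · apply iSup_le
        intro x
        by_cases hx : x ∈ C
        · rw [show ind C x = 0 from by simp [ind, hx], sub_zero]
          exact_mod_cast hMle y _ (hmemCK x hx)
        · rw [show ind C x = ⊤ from by simp [ind, hx], EReal.sub_top]
          exact bot_le
      · obtain ⟨u, huK, hueq⟩ := hMmem y
        have hueq' : (inner ℝ u y : ℝ) = M y := hueq
        obtain ⟨a, haX, hga⟩ := huK
        have haC : a ∈ C := ⟨a, haX, 1, one_pos, (one_smul _ _).symm⟩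
        have heq : ((M y : ℝ) : EReal) = ((inner ℝ (radProj N a) y : ℝ) : EReal) - ind C a := by
          rw [show ind C a = 0 from by simp [ind, haC], sub_zero, hgrad a haX, hga, hueq']
        rw [heq]
        exact le_iSup (fun x' => ((inner ℝ (radProj N x') y : ℝ) : EReal) - ind C x') a
    funext x
    unfold capraBiconj
    have hrw : ∀ y : EuclideanSpace ℝ (Fin d),
        ((inner ℝ (radProj N x) y : ℝ) : EReal) - capraConj N (ind C) y
          = (((inner ℝ (radProj N x) y : ℝ) - M y : ℝ) : EReal) := by
      intro y; rw [hconj y, ← EReal.coe_sub]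
    by_cases hx : x ∈ C
    · rw [show ind C x = 0 from by simp [ind, hx]]
      apply le_antisymm
      · have hM0 : M 0 = 0 := by
          obtain ⟨u, hu, hue⟩ := hMmem 0
          rw [← hue]
          simp
        refine le_iSup_of_le 0 ?_
        rw [hrw 0]
        have : ((inner ℝ (radProj N x) (0 : EuclideanSpace ℝ (Fin d)) : ℝ) - M 0 : ℝ) = 0 := by
          simp [hM0]
        rw [this]
        simp
      · apply iSup_le
        intro y
        rw [hrw y]
        have h1 : (inner ℝ (radProj N x) y : ℝ) - M y ≤ 0 :=
          sub_nonpos.2 (hMle y _ (hmemCK x hx))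
        exact_mod_cast h1
    · rw [show ind C x = ⊤ from by simp [ind, hx]]
      have hnot : radProj N x ∉ convexHull ℝ K := fun h => hx ((hmain x).2 h)
      obtain ⟨f, v, hfv, hvx⟩ :=
        geometric_hahn_banach_closed_point (convex_convexHull ℝ K) hDcl hnot
      set z := (InnerProductSpace.toDual ℝ (EuclideanSpace ℝ (Fin d))).symm f with hzdef
      have hzf : ∀ w : EuclideanSpace ℝ (Fin d), (inner ℝ z w : ℝ) = f w := fun w =>
        InnerProductSpace.toDual_symm_apply
      have hε : 0 < f (radProj N x) - v := sub_pos.2 hvx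
      symm
      rw [EReal.eq_top_iff_forall_lt]
      intro r
      set t : ℝ := (|r| + 1) / (f (radProj N x) - v) with htdef
      have ht : 0 < t := div_pos (by positivity) hε
      have hMb : M (t • z) ≤ t * v := by
        obtain ⟨u, huK, hue⟩ := hMmem (t • z)
        have hue' : (inner ℝ u (t • z) : ℝ) = M (t • z) := hue
        rw [← hue']
        have h1 : (inner ℝ u (t • z) : ℝ) = t * (inner ℝ z u : ℝ) := by
          rw [real_inner_smul_right, real_inner_comm]
        rw [h1, hzf]
        exact mul_le_mul_of_nonneg_left (le_of_lt (hfv u (subset_convexHull ℝ K huK))) ht.le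
      have hterm : r < (inner ℝ (radProj N x) (t • z) : ℝ) - M (t • z) := by
        have h1 : (inner ℝ (radProj N x) (t • z) : ℝ) = t * f (radProj N x) := by
          rw [real_inner_smul_right, real_inner_comm, hzf]
        have h2 : t * f (radProj N x) - t * v = |r| + 1 := by
          rw [← mul_sub, htdef]
          field_simp
        have h3 := le_abs_self r
        linarith
      calc (r : EReal)
          < (((inner ℝ (radProj N x) (t • z) : ℝ) - M (t • z) : ℝ) : EReal) := by
            exact_mod_cast hterm
        _ ≤ _ := by
            rw [← hrw (t • z)]
            exact le_iSup (fun y => ((inner ℝ (radProj N x) y : ℝ) : EReal)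
              - capraConj N (ind C) y) (t • z)
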